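/- With K = U_E diag(d₁,d₂,d₃)U_Eᵀ, d₁ > d₂ > d₃ > 0, and Qᵢ = 2U_E aᵢ aᵢᵀ U_Eᵀ − I, the Hessians are H_K(Qᵢ) = U_E Λᵢ U_Eᵀ with Λ₁ = diag(−d₂−d₃, d₁−d₃, d₁−d₂), Λ₂ = diag(d₂−d₃, −d₃−d₁, d₂−d₁), Λ₃ = diag(d₃−d₂, d₃−d₁, −d₁−d₂); consequently Q₁ has Morse index 1, Q₂ index 2, and Q₃ index 3 (global maximum). -/

import Mathlib

open Matrix

lemma hess_conj_aux (UE : Matrix (Fin 3) (Fin 3) ℝ) (hUE : UEᵀ * UE = 1)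
    (d Λ : Fin 3 → ℝ) (i : Fin 3)
    (hinner : ((2 • Matrix.single i i (1:ℝ) - 1) * Matrix.diagonal d).trace
        • (1 : Matrix (Fin 3) (Fin 3) ℝ)
        - (2 • Matrix.single i i (1:ℝ) - 1) * Matrix.diagonal d
        = Matrix.diagonal Λ) :
    ((2 • (UE * Matrix.single i i (1:ℝ) * UEᵀ) - 1)ᵀ
        * (UE * Matrix.diagonal d * UEᵀ)).trace • (1 : Matrix (Fin 3) (Fin 3) ℝ)
      - (2 • (UE * Matrix.single i i (1:ℝ) * UEᵀ) - 1)ᵀ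
        * (UE * Matrix.diagonal d * UEᵀ)
      = UE * Matrix.diagonal Λ * UEᵀ := by
  have h1 : UE * UEᵀ = 1 := mul_eq_one_comm.mp hUE
  set E := Matrix.single i i (1:ℝ) with hE
  have hEt : Eᵀ = E := by
    ext a b
    simp [hE, Matrix.single, and_comm]
  have hconj : ∀ A B : Matrix (Fin 3) (Fin 3) ℝ,
      (UE * A * UEᵀ) * (UE * B * UEᵀ) = UE * (A * B) * UEᵀ := by
    intro A B
    simp only [Matrix.mul_assoc]
    rw [← Matrix.mul_assoc UEᵀ UE, hUE, Matrix.one_mul]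
  have hf : ∀ A : Matrix (Fin 3) (Fin 3) ℝ,
      2 • (UE * A * UEᵀ) - 1 = UE * (2 • A - 1) * UEᵀ := by
    intro A
    rw [Matrix.mul_sub, Matrix.sub_mul, Matrix.mul_one, h1, Matrix.mul_smul,
      Matrix.smul_mul]
  have hQt : (2 • (UE * E * UEᵀ) - 1)ᵀ = UE * (2 • E - 1) * UEᵀ := by
    rw [hf, Matrix.transpose_mul, Matrix.transpose_mul, Matrix.transpose_sub,
      Matrix.transpose_smul, hEt, Matrix.transpose_one, Matrix.transpose_transpose,
      Matrix.mul_assoc]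
  rw [hQt, hconj]
  have htr : (UE * ((2 • E - 1) * Matrix.diagonal d) * UEᵀ).trace
      = ((2 • E - 1) * Matrix.diagonal d).trace := by
    rw [Matrix.trace_mul_comm, ← Matrix.mul_assoc, hUE, Matrix.one_mul]
  rw [htr]
  calc ((2 • E - 1) * Matrix.diagonal d).trace • (1 : Matrix (Fin 3) (Fin 3) ℝ)
        - UE * ((2 • E - 1) * Matrix.diagonal d) * UEᵀ
      = UE * (((2 • E - 1) * Matrix.diagonal d).trace • (1 : Matrix (Fin 3) (Fin 3) ℝ)
          - (2 • E - 1) * Matrix.diagonal d) * UEᵀ := by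
        rw [Matrix.mul_sub, Matrix.mul_smul, Matrix.mul_one]
        rw [Matrix.sub_mul, Matrix.sub_mul, Matrix.smul_mul, Matrix.smul_mul, h1,
          Matrix.mul_assoc]
    _ = UE * Matrix.diagonal Λ * UEᵀ := by rw [hinner]


/-- with `K = U_E diag(d₁,d₂,d₃) U_Eᵀ`, `d₁ > d₂ > d₃ > 0`, and
`Qᵢ = 2 U_E aᵢ aᵢᵀ U_Eᵀ − I`, the Hessians `H_K(Qᵢ) = trace(QᵢᵀK) I − QᵢᵀK` satisfy
`H_K(Qᵢ) = U_E Λᵢ U_Eᵀ` with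
`Λ₁ = diag(−d₂−d₃, d₁−d₃, d₁−d₂)`, `Λ₂ = diag(d₂−d₃, −d₃−d₁, d₂−d₁)`,
`Λ₃ = diag(d₃−d₂, d₃−d₁, −d₁−d₂)`; consequently (counting negative eigenvalues)
`Q₁` has Morse index 1, `Q₂` index 2, and `Q₃` index 3 (the global maximum). -/
theorem hessians_at_saddles (UE : Matrix (Fin 3) (Fin 3) ℝ) (hUE : UEᵀ * UE = 1)
    (d : Fin 3 → ℝ) (hd : d 0 > d 1 ∧ d 1 > d 2 ∧ d 2 > 0)
    (K : Matrix (Fin 3) (Fin 3) ℝ) (hK : K = UE * Matrix.diagonal d * UEᵀ)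
    (Q₁ Q₂ Q₃ : Matrix (Fin 3) (Fin 3) ℝ)
    (hQ₁ : Q₁ = 2 • (UE * Matrix.single 0 0 (1 : ℝ) * UEᵀ) - 1)
    (hQ₂ : Q₂ = 2 • (UE * Matrix.single 1 1 (1 : ℝ) * UEᵀ) - 1)
    (hQ₃ : Q₃ = 2 • (UE * Matrix.single 2 2 (1 : ℝ) * UEᵀ) - 1) :
    ((Q₁ᵀ * K).trace • (1 : Matrix (Fin 3) (Fin 3) ℝ) - Q₁ᵀ * K =
        UE * Matrix.diagonal ![-(d 1) - d 2, d 0 - d 2, d 0 - d 1] * UEᵀ) ∧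
    ((Q₂ᵀ * K).trace • (1 : Matrix (Fin 3) (Fin 3) ℝ) - Q₂ᵀ * K =
        UE * Matrix.diagonal ![d 1 - d 2, -(d 2) - d 0, d 1 - d 0] * UEᵀ) ∧
    ((Q₃ᵀ * K).trace • (1 : Matrix (Fin 3) (Fin 3) ℝ) - Q₃ᵀ * K =
        UE * Matrix.diagonal ![d 2 - d 1, d 2 - d 0, -(d 0) - d 1] * UEᵀ) ∧
    -- Morse index 1 for Q₁: exactly one negative diagonal entry of Λ₁
    (-(d 1) - d 2 < 0 ∧ 0 < d 0 - d 2 ∧ 0 < d 0 - d 1) ∧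
    -- Morse index 2 for Q₂
    (0 < d 1 - d 2 ∧ -(d 2) - d 0 < 0 ∧ d 1 - d 0 < 0) ∧
    -- Morse index 3 for Q₃ (global maximum)
    (d 2 - d 1 < 0 ∧ d 2 - d 0 < 0 ∧ -(d 0) - d 1 < 0) := by
  obtain ⟨h01, h12, h2⟩ := hd
  subst hK hQ₁ hQ₂ hQ₃
  refine ⟨?_, ?_, ?_, ⟨by linarith, by linarith, by linarith⟩,
    ⟨by linarith, by linarith, by linarith⟩, ⟨by linarith, by linarith, by linarith⟩⟩ <;>
  · apply hess_conj_aux UE hUE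
    ext a b
    fin_cases a <;> fin_cases b <;>
      simp [Matrix.trace, Matrix.mul_apply, Fin.sum_univ_three, Matrix.diag,
        Matrix.single, Matrix.diagonal, Matrix.one_apply] <;> ring
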